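/- For a connected finite simple graph Γ and any sign function σ on its edges, the largest eigenvalue of the Kirchhoff matrix satisfies λ¹(K(Γ, σ)) ≤ λ¹(K(−Γ)), where −Γ is Γ with all edges signed −1, and equality holds if and only if (Γ, σ) is antibalanced. -/

import Mathlib

open SimpleGraph
open scoped Classical

/-- A signed simple graph `(G, σ)` is balanced if every cycle is positive,
i.e., the product of the signs of its edges is `+1`. -/
def IsBalanced {V : Type*} (G : SimpleGraph V) (σ : Sym2 V → ℤ) : Prop :=
  ∀ ⦃v : V⦄ (w : G.Walk v v), w.IsCycle → (w.edges.map σ).prod = 1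

/-- The adjacency matrix of the signed simple graph `(G, σ)`. -/
noncomputable def signedAdj {V : Type*} [Fintype V] (G : SimpleGraph V)
    (σ : Sym2 V → ℤ) : Matrix V V ℝ :=
  Matrix.of fun i j => if G.Adj i j then (σ s(i, j) : ℝ) else 0

/-- The Kirchhoff matrix `K(Σ) = D(G) - A(Σ)`, where `D(G)` is the diagonal matrix of
vertex degrees of the underlying graph. -/
noncomputable def kirchhoff {V : Type*} [Fintype V] [DecidableEq V]
    (G : SimpleGraph V) (σ : Sym2 V → ℤ) : Matrix V V ℝ :=
  Matrix.diagonal (fun v => (Nat.card (G.neighborSet v) : ℝ)) - signedAdj G σ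

/-- The largest eigenvalue of a (real symmetric) matrix. -/
noncomputable def maxEigen {V : Type*} [Fintype V] (M : Matrix V V ℝ) : ℝ :=
  sSup {μ : ℝ | Module.End.HasEigenvalue M.mulVecLin μ}

private lemma walk_prod_sq {V : Type*} {G : SimpleGraph V} (τ : Sym2 V → ℤ)
    (hsq : ∀ e ∈ G.edgeSet, τ e * τ e = 1) :
    ∀ {a b : V} (w : G.Walk a b), (w.edges.map τ).prod * (w.edges.map τ).prod = 1 := by
  intro a b w
  induction w with
  | nil => simp
  | @cons a c b h p ih =>
    simp only [Walk.edges_cons, List.map_cons, List.prod_cons]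
    have h1 : τ s(a, c) * τ s(a, c) = 1 := hsq _ (G.mem_edgeSet.mpr h)
    calc τ s(a,c) * (p.edges.map τ).prod * (τ s(a,c) * (p.edges.map τ).prod)
        = (τ s(a,c) * τ s(a,c)) * ((p.edges.map τ).prod * (p.edges.map τ).prod) := by ring
      _ = 1 := by rw [h1, ih]; ring

private lemma split_closed {V : Type*} {G : SimpleGraph V} (τ : Sym2 V → ℤ) :
    ∀ {u : V} (w : G.Walk u u), 2 ≤ w.support.tail.count u →
    ∃ (w1 w2 : G.Walk u u), w1.length ≠ 0 ∧ w2.length ≠ 0 ∧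
      w1.length + w2.length = w.length ∧
      (w.edges.map τ).prod = (w1.edges.map τ).prod * (w2.edges.map τ).prod := by
  intro u w hcount
  cases w with
  | nil => simp at hcount
  | @cons _ c _ h q =>
    have hq : 2 ≤ q.support.count u := by simpa using hcount
    have hu : u ∈ q.support := List.count_pos_iff.mp (by omega)
    have hspec := q.take_spec hu
    set q1 := q.takeUntil u hu with hq1
    set q2 := q.dropUntil u hu with hq2
    have hcnt1 : q1.support.count u = 1 := q.count_support_takeUntil_eq_one hu
    have hsupp : q.support = q1.support ++ q2.support.tail := by
      rw [← hspec, Walk.support_append]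
    have hcnt2 : 1 ≤ q2.support.tail.count u := by
      have := hq
      rw [hsupp, List.count_append, hcnt1] at this
      omega
    have h2ne : q2.length ≠ 0 := by
      intro h0
      have hl : q2.support.length = 1 := by rw [q2.length_support, h0]
      have : q2.support.tail = [] := by
        have := @List.length_tail _ q2.support
        rw [hl] at this
        simpa using List.eq_nil_of_length_eq_zero this
      rw [this] at hcnt2
      simp at hcnt2
    refine ⟨Walk.cons h q1, q2, by simp, h2ne, ?_, ?_⟩
    · have := congrArg Walk.length hspec
      rw [Walk.length_append] at this
      simp [Walk.length_cons]
      omega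
    · rw [← hspec]
      simp [Walk.edges_cons, Walk.edges_append, List.map_append, List.prod_append, mul_assoc]

private lemma length_rotate' {V : Type*} {G : SimpleGraph V} {u v : V} (c : G.Walk v v)
    (h : u ∈ c.support) : (c.rotate u h).length = c.length := by
  have h2 := congrArg Walk.length (c.take_spec h)
  rw [Walk.length_append] at h2
  rw [Walk.rotate, Walk.length_append]
  omega

private lemma closed_walk_prod {V : Type*} {G : SimpleGraph V} (τ : Sym2 V → ℤ)
    (hsq : ∀ e ∈ G.edgeSet, τ e * τ e = 1)
    (hcyc : ∀ ⦃v : V⦄ (w : G.Walk v v), w.IsCycle → (w.edges.map τ).prod = 1) :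
    ∀ (n : ℕ) {a : V} (w : G.Walk a a), w.length ≤ n → (w.edges.map τ).prod = 1 := by
  intro n
  induction n using Nat.strong_induction_on with
  | _ n IH =>
    intro a w hw
    cases w with
    | nil => simp
    | @cons _ b _ h p =>
      by_cases hnd : (Walk.cons h p).support.tail.Nodup
      · -- p is a path
        have hpath : p.IsPath := by
          rw [Walk.isPath_def]
          simpa using hnd
        by_cases he : s(a, b) ∈ p.edges
        · -- p must be the single edge b-a
          have hba : b ≠ a := h.ne'
          cases p with
          | nil => exact absurd rfl hba
          | @cons _ c _ h2 p2 =>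
            obtain ⟨x, q, h', hc⟩ := Walk.exists_cons_eq_concat h2 p2
            rw [hc] at he hpath ⊢
            rw [Walk.edges_concat] at he
            rcases (by simpa [List.concat_eq_append] using he : s(a,b) ∈ q.edges ∨ s(a,b) = s(x,a)) with he1 | he2
            · exfalso
              have hmem : a ∈ q.support := q.fst_mem_support_of_mem_edges he1
              have hnd2 := hpath.support_nodup
              rw [Walk.support_concat] at hnd2
              rcases List.nodup_append.mp hnd2 with ⟨-, -, hdisj⟩
              exact hdisj a hmem a (List.mem_singleton_self a) rfl
            · have hx : x = b := by
                rcases Sym2.eq_iff.mp he2 with ⟨h1, h2'⟩ | ⟨h1, h2'⟩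
                · exact absurd h2' hba
                · exact h2'.symm
              subst hx
              have hq0 : q.edges = [] := by
                have hqpath : q.IsPath := by
                  rw [Walk.concat_eq_append] at hpath
                  exact hpath.of_append_left
                cases q with
                | nil => rfl
                | @cons _ d _ h3 q3 =>
                  exfalso
                  have hnd2 := hqpath.support_nodup
                  rw [Walk.support_cons] at hnd2
                  exact (List.nodup_cons.mp hnd2).1 q3.end_mem_support
              have hsw : s(x, a) = s(a, x) := Sym2.eq_swap
              simp only [Walk.edges_cons, Walk.edges_concat, hq0, List.concat_eq_append,
                List.nil_append, List.map_cons, List.map_nil, List.prod_cons, List.prod_nil,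
                mul_one, hsw]
              exact hsq _ (G.mem_edgeSet.mpr h)
        · -- it is a cycle
          have : (Walk.cons h p).IsCycle := (Walk.cons_isCycle_iff p h).mpr ⟨hpath, he⟩
          exact hcyc _ this
      · -- there is a duplicated vertex; rotate and split
        obtain ⟨u, hu2⟩ : ∃ u, 2 ≤ (Walk.cons h p).support.tail.count u := by
          by_contra hcon
          push_neg at hcon
          exact hnd (List.nodup_iff_count_le_one.mpr fun u => by have := hcon u; omega)
        have husup : u ∈ (Walk.cons h p).support :=
          List.mem_of_mem_tail (List.count_pos_iff.mp (by omega))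
        have hprodeq : ((Walk.cons h p).edges.map τ).prod
            = (((Walk.cons h p).rotate u husup).edges.map τ).prod :=
          (((Walk.cons h p).rotate_edges u husup).map τ).perm.prod_eq.symm
        have hcount2 : 2 ≤ ((Walk.cons h p).rotate u husup).support.tail.count u := by
          rw [((Walk.cons h p).support_rotate u husup).perm.count_eq]
          exact hu2
        obtain ⟨w1, w2, h1ne, h2ne, hsum, hprod⟩ := split_closed τ _ hcount2
        have hlenrot : ((Walk.cons h p).rotate u husup).length = (Walk.cons h p).length :=
          length_rotate' _ _
        have hlen : (Walk.cons h p).length ≤ n := hw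
        have e1 : (w1.edges.map τ).prod = 1 := by
          refine IH w1.length ?_ w1 le_rfl
          omega
        have e2 : (w2.edges.map τ).prod = 1 := by
          refine IH w2.length ?_ w2 le_rfl
          omega
        rw [hprodeq, hprod, e1, e2, mul_one]

private lemma exists_potential {V : Type*} {G : SimpleGraph V} (hconn : G.Connected)
    (τ : Sym2 V → ℤ) (hsq : ∀ e ∈ G.edgeSet, τ e * τ e = 1)
    (hbal : ∀ ⦃v : V⦄ (w : G.Walk v v), w.IsCycle → (w.edges.map τ).prod = 1) :
    ∃ θ : V → ℤ, (∀ v, θ v = 1 ∨ θ v = -1) ∧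
      ∀ ⦃u v : V⦄, G.Adj u v → τ s(u, v) = θ u * θ v := by
  have hV : Nonempty V := hconn.nonempty
  set r := Classical.arbitrary V with hr
  have hwalk : ∀ v : V, Nonempty (G.Walk r v) := fun v => hconn r v
  refine ⟨fun v => (((hwalk v).some).edges.map τ).prod, ?_, ?_⟩
  · intro v
    exact Int.eq_one_or_neg_one_of_mul_eq_one (walk_prod_sq τ hsq ((hwalk v).some))
  · intro u v h
    set wu := (hwalk u).some with hwu
    set wv := (hwalk v).some with hwv
    set C : G.Walk r r := (wu.append (Walk.cons h Walk.nil)).append wv.reverse with hC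
    have h1 : (C.edges.map τ).prod = 1 := closed_walk_prod τ hsq hbal C.length C le_rfl
    have h2 : (C.edges.map τ).prod
        = (wu.edges.map τ).prod * τ s(u, v) * (wv.edges.map τ).prod := by
      rw [hC]
      simp [Walk.edges_append, Walk.edges_reverse, List.map_append, List.prod_append,
        List.map_reverse, List.prod_reverse]
      ring
    have hsqu := walk_prod_sq τ hsq wu
    have hsqv := walk_prod_sq τ hsq wv
    have key : (wu.edges.map τ).prod * τ s(u, v) * (wv.edges.map τ).prod = 1 := by
      rw [← h2]; exact h1
    calc τ s(u, v)
        = ((wu.edges.map τ).prod * (wu.edges.map τ).prod) * τ s(u, v)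
            * ((wv.edges.map τ).prod * (wv.edges.map τ).prod) := by rw [hsqu, hsqv]; ring
      _ = ((wu.edges.map τ).prod * (wv.edges.map τ).prod)
            * ((wu.edges.map τ).prod * τ s(u, v) * (wv.edges.map τ).prod) := by ring
      _ = (wu.edges.map τ).prod * (wv.edges.map τ).prod := by rw [key, mul_one]

section LinAlg

variable {V : Type*} [Fintype V] [DecidableEq V]

private lemma hasEigen_transfer (M : Matrix V V ℝ) (μ : ℝ) :
    Module.End.HasEigenvalue M.mulVecLin μ ↔
      Module.End.HasEigenvalue (Matrix.toEuclideanLin M) μ := by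
  constructor
  · intro h
    obtain ⟨x, hmem, hx0⟩ := h.exists_hasEigenvector
    have hx : M.mulVec x = μ • x := by
      have := Module.End.mem_eigenspace_iff.mp hmem
      simpa [Matrix.mulVecLin_apply] using this
    refine Module.End.hasEigenvalue_of_hasEigenvector
      (x := (WithLp.equiv 2 (V → ℝ)).symm x) ⟨?_, ?_⟩
    · rw [Module.End.mem_eigenspace_iff]
      exact congrArg (WithLp.toLp 2) hx
    · intro h0
      apply hx0
      have := congrArg (WithLp.equiv 2 (V → ℝ)) h0
      simpa using this
  · intro h
    obtain ⟨y, hmem, hy0⟩ := h.exists_hasEigenvector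
    have hy : Matrix.toEuclideanLin M y = μ • y := Module.End.mem_eigenspace_iff.mp hmem
    refine Module.End.hasEigenvalue_of_hasEigenvector
      (x := WithLp.equiv 2 (V → ℝ) y) ⟨?_, ?_⟩
    · rw [Module.End.mem_eigenspace_iff, Matrix.mulVecLin_apply]
      have := congrArg (WithLp.equiv 2 (V → ℝ)) hy
      exact this
    · intro h0
      apply hy0
      have := congrArg (WithLp.equiv 2 (V → ℝ)).symm h0
      simpa using this

noncomputable def rq (M : Matrix V V ℝ) (x : EuclideanSpace ℝ V) : ℝ :=
  (inner ℝ (Matrix.toEuclideanLin M x) x : ℝ) / ‖x‖ ^ 2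

private lemma rq_eigenvec {M : Matrix V V ℝ} {μ : ℝ} {x : EuclideanSpace ℝ V}
    (hx : Matrix.toEuclideanLin M x = μ • x) (hx0 : x ≠ 0) : rq M x = μ := by
  have hnorm : ‖x‖ ≠ 0 := norm_ne_zero_iff.mpr hx0
  unfold rq
  rw [hx, real_inner_smul_left, real_inner_self_eq_norm_sq]
  field_simp

private lemma rq_bddAbove (M : Matrix V V ℝ) :
    BddAbove (Set.range fun x : {x : EuclideanSpace ℝ V // x ≠ 0} => rq M x.val) := by
  set T := LinearMap.toContinuousLinearMap (Matrix.toEuclideanLin M) with hT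
  refine ⟨‖T‖, ?_⟩
  rintro - ⟨⟨x, hx0⟩, rfl⟩
  have hnorm : (0:ℝ) < ‖x‖ := norm_pos_iff.mpr hx0
  have h1 : (inner ℝ (Matrix.toEuclideanLin M x) x : ℝ) ≤ ‖T x‖ * ‖x‖ := by
    have := real_inner_le_norm (Matrix.toEuclideanLin M x) x
    simpa [hT] using this
  have h2 : ‖T x‖ ≤ ‖T‖ * ‖x‖ := T.le_opNorm x
  have : (inner ℝ (Matrix.toEuclideanLin M x) x : ℝ) ≤ ‖T‖ * ‖x‖ ^ 2 := by
    calc (inner ℝ (Matrix.toEuclideanLin M x) x : ℝ) ≤ ‖T x‖ * ‖x‖ := h1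
      _ ≤ ‖T‖ * ‖x‖ * ‖x‖ := by nlinarith [norm_nonneg (T x), norm_nonneg x]
      _ = ‖T‖ * ‖x‖ ^ 2 := by ring
  unfold rq
  rw [div_le_iff₀ (by positivity)]
  linarith

private lemma maxEigen_spec [Nonempty V] (M : Matrix V V ℝ) (hM : M.IsHermitian) :
    maxEigen M = (⨆ x : {x : EuclideanSpace ℝ V // x ≠ 0}, rq M x.val) ∧
      Module.End.HasEigenvalue M.mulVecLin (maxEigen M) := by
  have hsym : (Matrix.toEuclideanLin M).IsSymmetric :=
    Matrix.isHermitian_iff_isSymmetric.mp hM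
  set s := ⨆ x : {x : EuclideanSpace ℝ V // x ≠ 0}, rq M x.val with hs
  have hEig : Module.End.HasEigenvalue (Matrix.toEuclideanLin M) s := by
    have := hsym.hasEigenvalue_iSup_of_finiteDimensional
    exact this
  have hub : ∀ μ : ℝ, Module.End.HasEigenvalue M.mulVecLin μ → μ ≤ s := by
    intro μ hμ
    obtain ⟨y, hmem, hy0⟩ := ((hasEigen_transfer M μ).mp hμ).exists_hasEigenvector
    have hy : Matrix.toEuclideanLin M y = μ • y := Module.End.mem_eigenspace_iff.mp hmem
    have : rq M y = μ := rq_eigenvec hy hy0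
    rw [← this]
    exact le_ciSup (rq_bddAbove M) ⟨y, hy0⟩
  have hmem : Module.End.HasEigenvalue M.mulVecLin s := (hasEigen_transfer M s).mpr hEig
  have heq : maxEigen M = s := by
    unfold maxEigen
    apply le_antisymm
    · exact csSup_le ⟨s, hmem⟩ hub
    · exact le_csSup ⟨s, hub⟩ hmem
  exact ⟨heq, heq ▸ hmem⟩

end LinAlg

section Quad

variable {V : Type*} [Fintype V] [DecidableEq V] (G : SimpleGraph V)

noncomputable def qf (σ : Sym2 V → ℤ) (x : V → ℝ) : ℝ :=
  ∑ v, ∑ u, if G.Adj v u then (x v - (σ s(v, u) : ℝ) * x u) ^ 2 else 0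

lemma sum_ite_adj (v : V) (c : ℝ) :
    (∑ u, if G.Adj v u then c else 0) = (Nat.card (G.neighborSet v) : ℝ) * c := by
  classical
  rw [← Finset.sum_filter, Finset.sum_const, nsmul_eq_mul]
  congr 2
  rw [← SimpleGraph.neighborFinset_eq_filter, SimpleGraph.neighborFinset_def,
    Set.toFinset_card, Nat.card_eq_fintype_card]

lemma inner_toEuclideanLin (M : Matrix V V ℝ) (x : EuclideanSpace ℝ V) :
    (inner ℝ (Matrix.toEuclideanLin M x) x : ℝ) = ∑ v, (∑ u, M v u * x u) * x v := by
  simp [PiLp.inner_apply, RCLike.inner_apply, Matrix.toEuclideanLin_apply, Matrix.mulVec,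
    dotProduct, mul_comm]

lemma adj_ite_comm (v u : V) (c : ℝ) :
    (if G.Adj v u then c else 0) = (if G.Adj u v then c else 0) := by
  by_cases h : G.Adj v u
  · rw [if_pos h, if_pos (G.adj_symm h)]
  · rw [if_neg h, if_neg (fun hh => h (G.adj_symm hh))]

lemma inner_kirchhoff (σ : Sym2 V → ℤ) (hσ : ∀ e ∈ G.edgeSet, σ e = 1 ∨ σ e = -1)
    (x : EuclideanSpace ℝ V) :
    2 * (inner ℝ (Matrix.toEuclideanLin (kirchhoff G σ) x) x : ℝ) = qf G σ x := by
  rw [inner_toEuclideanLin]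
  have hK : ∀ v u, (kirchhoff G σ) v u
      = (if v = u then (Nat.card (G.neighborSet v) : ℝ) else 0)
        - (if G.Adj v u then (σ s(v, u) : ℝ) else 0) := by
    intro v u
    rw [kirchhoff, Matrix.sub_apply, Matrix.diagonal_apply, signedAdj, Matrix.of_apply]
  have hsq : ∀ v u, G.Adj v u → ((σ s(v, u) : ℝ)) ^ 2 = 1 := by
    intro v u h
    rcases hσ _ (G.mem_edgeSet.mpr h) with h1 | h1 <;> rw [h1] <;> norm_num
  have expand : ∀ v u, (if G.Adj v u then (x v - (σ s(v, u) : ℝ) * x u) ^ 2 else 0)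
      = (if G.Adj v u then x v ^ 2 else 0) + (if G.Adj v u then x u ^ 2 else 0)
        - 2 * (if G.Adj v u then (σ s(v, u) : ℝ) * x u * x v else 0) := by
    intro v u
    by_cases h : G.Adj v u
    · simp only [h, if_true]
      nlinarith [hsq v u h]
    · simp [h]
  have lhs_eq : (∑ v, (∑ u, (kirchhoff G σ) v u * x u) * x v)
      = (∑ v, (Nat.card (G.neighborSet v) : ℝ) * x v ^ 2)
        - ∑ v, ∑ u, (if G.Adj v u then (σ s(v, u) : ℝ) * x u * x v else 0) := by
    rw [← Finset.sum_sub_distrib]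
    apply Finset.sum_congr rfl
    intro v _
    rw [Finset.sum_mul]
    have hterm : ∀ u, (kirchhoff G σ) v u * x u * x v
        = (if v = u then (Nat.card (G.neighborSet v) : ℝ) * x u * x v else 0)
          - (if G.Adj v u then (σ s(v, u) : ℝ) * x u * x v else 0) := by
      intro u
      rw [hK]
      split_ifs <;> ring
    rw [Finset.sum_congr rfl (fun u _ => hterm u), Finset.sum_sub_distrib,
      Finset.sum_ite_eq, if_pos (Finset.mem_univ v)]
    congr 1
    ring
  have first_eq : (∑ v, ∑ u, if G.Adj v u then x v ^ 2 else 0)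
      = ∑ v, (Nat.card (G.neighborSet v) : ℝ) * x v ^ 2 :=
    Finset.sum_congr rfl (fun v _ => sum_ite_adj G v _)
  have comm_eq : (∑ v, ∑ u, if G.Adj v u then x u ^ 2 else 0)
      = ∑ v, (Nat.card (G.neighborSet v) : ℝ) * x v ^ 2 := by
    rw [Finset.sum_comm]
    apply Finset.sum_congr rfl
    intro u _
    rw [← sum_ite_adj G u (x u ^ 2)]
    exact Finset.sum_congr rfl (fun v _ => adj_ite_comm G v u _)
  have expand_sum : qf G σ x
      = ((∑ v, ∑ u, if G.Adj v u then x v ^ 2 else 0)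
        + ∑ v, ∑ u, if G.Adj v u then x u ^ 2 else 0)
        - 2 * ∑ v, ∑ u, if G.Adj v u then (σ s(v, u) : ℝ) * x u * x v else 0 := by
    unfold qf
    calc (∑ v, ∑ u, if G.Adj v u then (x v - (σ s(v, u) : ℝ) * x u) ^ 2 else 0)
        = ∑ v, ∑ u, ((if G.Adj v u then x v ^ 2 else 0) + (if G.Adj v u then x u ^ 2 else 0)
            - 2 * if G.Adj v u then (σ s(v, u) : ℝ) * x u * x v else 0) := by
          apply Finset.sum_congr rfl
          intro v _
          exact Finset.sum_congr rfl (fun u _ => expand v u)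
      _ = _ := by
          simp only [Finset.sum_sub_distrib, Finset.sum_add_distrib, ← Finset.mul_sum]
  rw [lhs_eq, expand_sum, first_eq, comm_eq]
  ring

end Quad

section Compare

variable {V : Type*} [Fintype V] [DecidableEq V] (G : SimpleGraph V)

noncomputable def absv (x : EuclideanSpace ℝ V) : EuclideanSpace ℝ V :=
  (WithLp.equiv 2 (V → ℝ)).symm (fun v => |x v|)

lemma absv_apply (x : EuclideanSpace ℝ V) (v : V) : absv x v = |x v| := rfl

lemma absv_norm (x : EuclideanSpace ℝ V) : ‖absv x‖ = ‖x‖ := by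
  rw [EuclideanSpace.norm_eq, EuclideanSpace.norm_eq]
  congr 1
  apply Finset.sum_congr rfl
  intro v _
  rw [absv_apply, Real.norm_eq_abs, Real.norm_eq_abs, abs_abs]

lemma absv_ne_zero {x : EuclideanSpace ℝ V} (hx : x ≠ 0) : absv x ≠ 0 := by
  intro h0
  apply hx
  have h1 : ‖x‖ = 0 := by rw [← absv_norm x, h0, norm_zero]
  exact norm_eq_zero.mp h1

lemma qf_le_abs (σ : Sym2 V → ℤ) (hσ : ∀ e ∈ G.edgeSet, σ e = 1 ∨ σ e = -1)
    (x : EuclideanSpace ℝ V) :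
    qf G σ x ≤ qf G (fun _ => -1) (fun v => |x v|) := by
  unfold qf
  apply Finset.sum_le_sum
  intro v _
  apply Finset.sum_le_sum
  intro u _
  by_cases h : G.Adj v u
  · rw [if_pos h, if_pos h]
    push_cast
    rcases hσ _ (G.mem_edgeSet.mpr h) with h1 | h1 <;> rw [h1] <;> push_cast <;>
      nlinarith [le_abs_self (x v * x u), neg_abs_le (x v * x u), abs_mul (x v) (x u),
        sq_abs (x v), sq_abs (x u), abs_nonneg (x v), abs_nonneg (x u)]
  · rw [if_neg h, if_neg h]

lemma qf_potential_eq (σ : Sym2 V → ℤ) (θ : V → ℤ)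
    (hθ : ∀ v, θ v = 1 ∨ θ v = -1)
    (hpot : ∀ ⦃u v : V⦄, G.Adj u v → (-σ s(u, v)) = θ u * θ v)
    (x : EuclideanSpace ℝ V) :
    qf G σ x = qf G (fun _ => -1) (fun v => (θ v : ℝ) * x v) := by
  unfold qf
  apply Finset.sum_congr rfl
  intro v _
  apply Finset.sum_congr rfl
  intro u _
  by_cases h : G.Adj v u
  · rw [if_pos h, if_pos h]
    have hσvu : (σ s(v, u) : ℝ) = -((θ v : ℝ) * (θ u : ℝ)) := by
      have h2 : ((-σ s(v, u) : ℤ) : ℝ) = ((θ v * θ u : ℤ) : ℝ) := by rw [hpot h]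
      push_cast at h2
      linarith
    have hv2 : (θ v : ℝ) ^ 2 = 1 := by rcases hθ v with h1 | h1 <;> rw [h1] <;> norm_num
    have hu2 : (θ u : ℝ) ^ 2 = 1 := by rcases hθ u with h1 | h1 <;> rw [h1] <;> norm_num
    rw [hσvu]
    push_cast
    linear_combination (x u ^ 2 * (θ u : ℝ) ^ 2 - x v ^ 2) * hv2
  · rw [if_neg h, if_neg h]

end Compare

private lemma walk_prod_eq_potential {V : Type*} {G : SimpleGraph V} (τ : Sym2 V → ℤ) (θ : V → ℤ)
    (hθ : ∀ v, θ v * θ v = 1)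
    (hpot : ∀ ⦃u v : V⦄, G.Adj u v → τ s(u, v) = θ u * θ v) :
    ∀ {a b : V} (w : G.Walk a b), (w.edges.map τ).prod = θ a * θ b := by
  intro a b w
  induction w with
  | nil => simpa using (hθ _).symm
  | @cons a c b h p ih =>
    simp only [Walk.edges_cons, List.map_cons, List.prod_cons]
    rw [hpot h, ih]
    linear_combination (θ a * θ b) * hθ c

section Main

variable {V : Type*} [Fintype V] [DecidableEq V] (G : SimpleGraph V)

lemma kirchhoff_isHermitian (σ : Sym2 V → ℤ) : (kirchhoff G σ).IsHermitian := by
  rw [Matrix.IsHermitian]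
  ext u v
  rw [Matrix.conjTranspose_apply, star_trivial]
  unfold kirchhoff signedAdj
  rw [Matrix.sub_apply, Matrix.sub_apply, Matrix.diagonal_apply, Matrix.diagonal_apply,
    Matrix.of_apply, Matrix.of_apply]
  congr 1
  · by_cases h : v = u
    · subst h; rfl
    · rw [if_neg h, if_neg (Ne.symm h)]
  · by_cases h : G.Adj v u
    · rw [if_pos h, if_pos (G.adj_symm h)]
      rw [Sym2.eq_swap]
    · rw [if_neg h, if_neg (fun hh => h (G.adj_symm hh))]

lemma rq_kirch_le (σ : Sym2 V → ℤ) (hσ : ∀ e ∈ G.edgeSet, σ e = 1 ∨ σ e = -1)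
    {x : EuclideanSpace ℝ V} (hx : x ≠ 0) :
    rq (kirchhoff G σ) x ≤ rq (kirchhoff G (fun _ => -1)) (absv x) := by
  have h1 := inner_kirchhoff G σ hσ x
  have h2 := inner_kirchhoff G (fun _ => -1) (fun e _ => Or.inr rfl) (absv x)
  have h3 : qf G σ x ≤ qf G (fun _ => -1) (absv x) := qf_le_abs G σ hσ x
  unfold rq
  rw [absv_norm]
  have hn : (0:ℝ) < ‖x‖ ^ 2 := by
    have := norm_pos_iff.mpr hx
    positivity
  have hinner : (inner ℝ (Matrix.toEuclideanLin (kirchhoff G σ) x) x : ℝ)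
      ≤ (inner ℝ (Matrix.toEuclideanLin (kirchhoff G (fun _ => -1)) (absv x)) (absv x) : ℝ) := by
    linarith
  exact (div_le_div_iff_of_pos_right hn).mpr hinner

lemma maxEigen_le [Nonempty V] (σ : Sym2 V → ℤ)
    (hσ : ∀ e ∈ G.edgeSet, σ e = 1 ∨ σ e = -1) :
    maxEigen (kirchhoff G σ) ≤ maxEigen (kirchhoff G (fun _ => -1)) := by
  obtain ⟨e1, -⟩ := maxEigen_spec (kirchhoff G σ) (kirchhoff_isHermitian G σ)
  obtain ⟨e2, -⟩ := maxEigen_spec (kirchhoff G (fun _ => -1)) (kirchhoff_isHermitian G _)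
  rw [e1, e2]
  have hne : Nonempty {x : EuclideanSpace ℝ V // x ≠ 0} := by
    obtain ⟨y, hy⟩ := exists_ne (0 : EuclideanSpace ℝ V)
    exact ⟨⟨y, hy⟩⟩
  apply ciSup_le
  rintro ⟨x, hx⟩
  calc rq (kirchhoff G σ) x ≤ rq (kirchhoff G (fun _ => -1)) (absv x) := rq_kirch_le G σ hσ hx
    _ ≤ _ := le_ciSup (rq_bddAbove _) ⟨absv x, absv_ne_zero hx⟩

end Main

section Main2

variable {V : Type*} [Fintype V] [DecidableEq V] (G : SimpleGraph V)

noncomputable def twist (θ : V → ℤ) (x : EuclideanSpace ℝ V) : EuclideanSpace ℝ V :=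
  (WithLp.equiv 2 (V → ℝ)).symm (fun v => (θ v : ℝ) * x v)

lemma twist_apply (θ : V → ℤ) (x : EuclideanSpace ℝ V) (v : V) :
    twist θ x v = (θ v : ℝ) * x v := rfl

lemma twist_norm {θ : V → ℤ} (hθ : ∀ v, θ v = 1 ∨ θ v = -1) (x : EuclideanSpace ℝ V) :
    ‖twist θ x‖ = ‖x‖ := by
  rw [EuclideanSpace.norm_eq, EuclideanSpace.norm_eq]
  congr 1
  apply Finset.sum_congr rfl
  intro v _
  rw [twist_apply, Real.norm_eq_abs, Real.norm_eq_abs, abs_mul]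
  rcases hθ v with h | h <;> rw [h] <;> norm_num

lemma twist_ne_zero {θ : V → ℤ} (hθ : ∀ v, θ v = 1 ∨ θ v = -1)
    {x : EuclideanSpace ℝ V} (hx : x ≠ 0) : twist θ x ≠ 0 := by
  intro h0
  apply hx
  have h1 : ‖x‖ = 0 := by rw [← twist_norm hθ x, h0, norm_zero]
  exact norm_eq_zero.mp h1

lemma twist_twist {θ : V → ℤ} (hθ : ∀ v, θ v = 1 ∨ θ v = -1) (x : EuclideanSpace ℝ V) :
    twist θ (twist θ x) = x := by
  apply (WithLp.equiv 2 (V → ℝ)).injective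
  funext v
  have : (WithLp.equiv 2 (V → ℝ)) (twist θ (twist θ x)) v = (θ v : ℝ) * ((θ v : ℝ) * x v) := rfl
  rw [this]
  rcases hθ v with h | h <;> rw [h] <;> push_cast <;> ring_nf <;> rfl

lemma rq_twist (σ : Sym2 V → ℤ) (hσ : ∀ e ∈ G.edgeSet, σ e = 1 ∨ σ e = -1)
    {θ : V → ℤ} (hθ : ∀ v, θ v = 1 ∨ θ v = -1)
    (hpot : ∀ ⦃u v : V⦄, G.Adj u v → (-σ s(u, v)) = θ u * θ v)
    {x : EuclideanSpace ℝ V} (hx : x ≠ 0) :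
    rq (kirchhoff G σ) x = rq (kirchhoff G (fun _ => -1)) (twist θ x) := by
  have h1 := inner_kirchhoff G σ hσ x
  have h2 := inner_kirchhoff G (fun _ => -1) (fun e _ => Or.inr rfl) (twist θ x)
  have h3 : qf G σ x = qf G (fun _ => -1) (twist θ x) := qf_potential_eq G σ θ hθ hpot x
  unfold rq
  rw [twist_norm hθ]
  congr 1
  linarith

lemma maxEigen_eq_of_potential [Nonempty V] (σ : Sym2 V → ℤ)
    (hσ : ∀ e ∈ G.edgeSet, σ e = 1 ∨ σ e = -1)
    {θ : V → ℤ} (hθ : ∀ v, θ v = 1 ∨ θ v = -1)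
    (hpot : ∀ ⦃u v : V⦄, G.Adj u v → (-σ s(u, v)) = θ u * θ v) :
    maxEigen (kirchhoff G σ) = maxEigen (kirchhoff G (fun _ => -1)) := by
  obtain ⟨e1, -⟩ := maxEigen_spec (kirchhoff G σ) (kirchhoff_isHermitian G σ)
  obtain ⟨e2, -⟩ := maxEigen_spec (kirchhoff G (fun _ => -1)) (kirchhoff_isHermitian G _)
  rw [e1, e2]
  have hne : Nonempty {x : EuclideanSpace ℝ V // x ≠ 0} := by
    obtain ⟨y, hy⟩ := exists_ne (0 : EuclideanSpace ℝ V)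
    exact ⟨⟨y, hy⟩⟩
  apply le_antisymm
  · apply ciSup_le
    rintro ⟨x, hx⟩
    rw [rq_twist G σ hσ hθ hpot hx]
    exact le_ciSup (rq_bddAbove _) ⟨twist θ x, twist_ne_zero hθ hx⟩
  · apply ciSup_le
    rintro ⟨x, hx⟩
    have : rq (kirchhoff G (fun _ => -1)) x = rq (kirchhoff G σ) (twist θ x) := by
      rw [rq_twist G σ hσ hθ hpot (twist_ne_zero hθ hx), twist_twist hθ]
    rw [this]
    exact le_ciSup (rq_bddAbove _) ⟨twist θ x, twist_ne_zero hθ hx⟩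

end Main2

section Main3

variable {V : Type*} [Fintype V] [DecidableEq V] (G : SimpleGraph V)

lemma neg_kirch_pointwise {lam : ℝ} {y : EuclideanSpace ℝ V}
    (hy : Matrix.toEuclideanLin (kirchhoff G (fun _ => -1)) y = lam • y) (v : V) :
    (Nat.card (G.neighborSet v) : ℝ) * y v + (∑ u, if G.Adj v u then y u else 0)
      = lam * y v := by
  have h1 := congrFun (congrArg (WithLp.equiv 2 (V → ℝ)) hy) v
  change ((kirchhoff G (fun _ => -1)).mulVec ((WithLp.equiv 2 (V → ℝ)) y)) v = _ at h1
  have h2 : ((kirchhoff G (fun _ => -1)).mulVec ((WithLp.equiv 2 (V → ℝ)) y)) v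
      = ∑ u, (kirchhoff G (fun _ => -1)) v u * y u := rfl
  have h3 : (WithLp.equiv 2 (V → ℝ)) (lam • y) v = lam * y v := rfl
  rw [h2, h3] at h1
  have hKvu : ∀ u, (kirchhoff G (fun _ => -1)) v u * y u
      = (if v = u then (Nat.card (G.neighborSet v) : ℝ) * y u else 0)
        + (if G.Adj v u then y u else 0) := by
    intro u
    unfold kirchhoff signedAdj
    rw [Matrix.sub_apply, Matrix.diagonal_apply, Matrix.of_apply]
    split_ifs <;> push_cast <;> ring
  rw [Finset.sum_congr rfl (fun u _ => hKvu u), Finset.sum_add_distrib,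
    Finset.sum_ite_eq, if_pos (Finset.mem_univ v)] at h1
  exact h1

lemma x_ne_zero_everywhere (hconn : G.Connected) {lam : ℝ} {x : EuclideanSpace ℝ V}
    (hx0 : x ≠ 0)
    (heig : Matrix.toEuclideanLin (kirchhoff G (fun _ => -1)) (absv x) = lam • absv x) :
    ∀ v, x v ≠ 0 := by
  have heq : ∀ v, (Nat.card (G.neighborSet v) : ℝ) * |x v|
      + (∑ u, if G.Adj v u then |x u| else 0) = lam * |x v| := by
    intro v
    have := neg_kirch_pointwise G heig v
    simpa [absv_apply] using this
  have hzero : ∀ v, x v = 0 → ∀ u, G.Adj v u → x u = 0 := by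
    intro v hv u hadj
    have h0 : (∑ u, if G.Adj v u then |x u| else 0) = 0 := by
      have := heq v
      rw [hv, abs_zero] at this
      linarith
    have hterms := (Finset.sum_eq_zero_iff_of_nonneg
      (fun u _ => by split_ifs; exacts [abs_nonneg _, le_rfl])).mp h0
    have := hterms u (Finset.mem_univ u)
    rw [if_pos hadj] at this
    exact abs_eq_zero.mp this
  obtain ⟨v0, hv0⟩ : ∃ v0, x v0 ≠ 0 := by
    by_contra hcon
    push_neg at hcon
    apply hx0
    apply (WithLp.equiv 2 (V → ℝ)).injective
    funext v
    simpa using hcon v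
  intro v
  have hreach : ∀ {a b : V} (w : G.Walk a b), x a ≠ 0 → x b ≠ 0 := by
    intro a b w
    induction w with
    | nil => exact id
    | @cons a c b h p ih =>
      intro ha
      apply ih
      intro hc
      exact ha (hzero c hc a (G.adj_symm h))
  exact hreach ((hconn v0 v).some) hv0

end Main3

section Main4

variable {V : Type*} [Fintype V] [DecidableEq V] (G : SimpleGraph V)

set_option maxHeartbeats 2000000 in
lemma potential_of_eq [Nonempty V] (hconn : G.Connected) (σ : Sym2 V → ℤ)
    (hσ : ∀ e ∈ G.edgeSet, σ e = 1 ∨ σ e = -1)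
    (heq : maxEigen (kirchhoff G σ) = maxEigen (kirchhoff G (fun _ => -1))) :
    ∃ θ : V → ℤ, (∀ v, θ v = 1 ∨ θ v = -1) ∧
      ∀ ⦃u v : V⦄, G.Adj u v → (-σ s(u, v)) = θ u * θ v := by
  classical
  obtain ⟨e1, hev1⟩ := maxEigen_spec (kirchhoff G σ) (kirchhoff_isHermitian G σ)
  obtain ⟨e2, -⟩ := maxEigen_spec (kirchhoff G (fun _ => -1)) (kirchhoff_isHermitian G _)
  set lam := maxEigen (kirchhoff G σ) with hlam
  set lam' := maxEigen (kirchhoff G (fun _ => -1)) with hlam'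
  obtain ⟨x, hmem, hx0⟩ := ((hasEigen_transfer _ lam).mp hev1).exists_hasEigenvector
  have hx : Matrix.toEuclideanLin (kirchhoff G σ) x = lam • x :=
    Module.End.mem_eigenspace_iff.mp hmem
  have hrq1 : rq (kirchhoff G σ) x = lam := rq_eigenvec hx hx0
  have habs0 : absv x ≠ 0 := absv_ne_zero hx0
  have hxn : ‖x‖ ≠ 0 := norm_ne_zero_iff.mpr hx0
  have habsn : ‖absv x‖ ≠ 0 := norm_ne_zero_iff.mpr habs0
  have hub : ∀ z : EuclideanSpace ℝ V, z ≠ 0 → rq (kirchhoff G (fun _ => -1)) z ≤ lam' := by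
    intro z hz
    exact (le_ciSup (rq_bddAbove _) ⟨z, hz⟩).trans_eq e2.symm
  have h1 : rq (kirchhoff G σ) x ≤ rq (kirchhoff G (fun _ => -1)) (absv x) :=
    rq_kirch_le G σ hσ hx0
  have habs : rq (kirchhoff G (fun _ => -1)) (absv x) = lam' := by
    apply le_antisymm (hub _ habs0)
    rw [← heq, ← hrq1]
    exact h1
  have hi1 : (inner ℝ (Matrix.toEuclideanLin (kirchhoff G σ) x) x : ℝ) = lam * ‖x‖ ^ 2 := by
    rw [← hrq1]
    unfold rq
    field_simp
  have hi2 : (inner ℝ (Matrix.toEuclideanLin (kirchhoff G (fun _ => -1)) (absv x)) (absv x) : ℝ)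
      = lam' * ‖x‖ ^ 2 := by
    rw [← habs]
    unfold rq
    rw [absv_norm]
    field_simp
  have hQ : qf G σ x = qf G (fun _ => -1) (absv x) := by
    rw [← inner_kirchhoff G σ hσ x, ← inner_kirchhoff G (fun _ => -1) (fun e _ => Or.inr rfl),
      hi1, hi2, heq]
  -- absv x is an eigenvector of the all-negative Kirchhoff matrix
  set T' := LinearMap.toContinuousLinearMap
    (Matrix.toEuclideanLin (kirchhoff G (fun _ => -1))) with hT'
  have hsa : IsSelfAdjoint T' := by
    rw [ContinuousLinearMap.isSelfAdjoint_iff_isSymmetric]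
    have : (T' : EuclideanSpace ℝ V →ₗ[ℝ] EuclideanSpace ℝ V)
        = Matrix.toEuclideanLin (kirchhoff G (fun _ => -1)) :=
      LinearMap.coe_toContinuousLinearMap _
    rw [this]
    exact Matrix.isHermitian_iff_isSymmetric.mp (kirchhoff_isHermitian G _)
  have hre : ∀ z : EuclideanSpace ℝ V, T'.reApplyInnerSelf z
      = (inner ℝ (Matrix.toEuclideanLin (kirchhoff G (fun _ => -1)) z) z : ℝ) := fun z => rfl
  have hmax : IsMaxOn T'.reApplyInnerSelf (Metric.sphere (0 : EuclideanSpace ℝ V) ‖absv x‖)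
      (absv x) := by
    intro z hz
    have hzn : ‖z‖ = ‖absv x‖ := by simpa [mem_sphere_zero_iff_norm] using hz
    have hz0 : z ≠ 0 := by
      intro h0
      rw [h0, norm_zero] at hzn
      exact habsn hzn.symm
    have hzn0 : ‖z‖ ≠ 0 := by rw [hzn]; exact habsn
    have hz2 : (inner ℝ (Matrix.toEuclideanLin (kirchhoff G (fun _ => -1)) z) z : ℝ)
        = rq (kirchhoff G (fun _ => -1)) z * ‖z‖ ^ 2 := by
      unfold rq
      field_simp
    have hax2 : (inner ℝ (Matrix.toEuclideanLin (kirchhoff G (fun _ => -1)) (absv x))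
        (absv x) : ℝ) = rq (kirchhoff G (fun _ => -1)) (absv x) * ‖absv x‖ ^ 2 := by
      unfold rq
      field_simp
    simp only [Set.mem_setOf_eq, hre, hz2, hax2]
    have hle : rq (kirchhoff G (fun _ => -1)) z ≤ lam' := hub z hz0
    calc rq (kirchhoff G (fun _ => -1)) z * ‖z‖ ^ 2 ≤ lam' * ‖z‖ ^ 2 := by
          nlinarith [sq_nonneg ‖z‖]
      _ = rq (kirchhoff G (fun _ => -1)) (absv x) * ‖absv x‖ ^ 2 := by rw [habs, hzn]
  have hev := hsa.hasEigenvector_of_isMaxOn habs0 hmax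
  have heigc : Matrix.toEuclideanLin (kirchhoff G (fun _ => -1)) (absv x)
      = (⨆ z : {z : EuclideanSpace ℝ V // z ≠ 0}, T'.rayleighQuotient z) • absv x :=
    hev.apply_eq_smul
  have hc : rq (kirchhoff G (fun _ => -1)) (absv x)
      = (⨆ z : {z : EuclideanSpace ℝ V // z ≠ 0}, T'.rayleighQuotient z) :=
    rq_eigenvec heigc habs0
  have heig' : Matrix.toEuclideanLin (kirchhoff G (fun _ => -1)) (absv x) = lam' • absv x := by
    rw [heigc, ← hc, habs]
  have hpos : ∀ v, x v ≠ 0 := x_ne_zero_everywhere G hconn hx0 heig'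
  -- termwise equality of the quadratic forms
  have hterm_le : ∀ v u, (if G.Adj v u then (x v - (σ s(v, u) : ℝ) * x u) ^ 2 else 0)
      ≤ (if G.Adj v u then (|x v| + |x u|) ^ 2 else 0) := by
    intro v u
    by_cases h : G.Adj v u
    · rw [if_pos h, if_pos h]
      rcases hσ _ (G.mem_edgeSet.mpr h) with h1 | h1 <;> rw [h1] <;> push_cast <;>
        nlinarith [le_abs_self (x v * x u), neg_abs_le (x v * x u), abs_mul (x v) (x u),
          sq_abs (x v), sq_abs (x u), abs_nonneg (x v), abs_nonneg (x u)]
    · rw [if_neg h, if_neg h]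
  have h2 : qf G σ x
      = ∑ v, ∑ u, if G.Adj v u then (x v - (σ s(v, u) : ℝ) * x u) ^ 2 else 0 := rfl
  have h3 : qf G (fun _ => -1) (absv x)
      = ∑ v, ∑ u, if G.Adj v u then (|x v| + |x u|) ^ 2 else 0 := by
    unfold qf
    apply Finset.sum_congr rfl
    intro v _
    apply Finset.sum_congr rfl
    intro u _
    by_cases h : G.Adj v u
    · rw [if_pos h, if_pos h]
      show (|x v| - (((-1 : ℤ)) : ℝ) * |x u|) ^ 2 = (|x v| + |x u|) ^ 2
      push_cast
      ring
    · rw [if_neg h, if_neg h]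
  have hQ' : (∑ v, ∑ u, if G.Adj v u then (x v - (σ s(v, u) : ℝ) * x u) ^ 2 else 0)
      = ∑ v, ∑ u, if G.Adj v u then (|x v| + |x u|) ^ 2 else 0 := by
    rw [← h2, ← h3]
    exact hQ
  have houter := (Finset.sum_eq_sum_iff_of_le
    (fun v _ => Finset.sum_le_sum (fun u _ => hterm_le v u))).mp hQ'
  have hinner : ∀ v u, G.Adj v u →
      (x v - (σ s(v, u) : ℝ) * x u) ^ 2 = (|x v| + |x u|) ^ 2 := by
    intro v u h
    have h4 := (Finset.sum_eq_sum_iff_of_le (fun u _ => hterm_le v u)).mp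
      (houter v (Finset.mem_univ v)) u (Finset.mem_univ u)
    rw [if_pos h, if_pos h] at h4
    exact h4
  -- construct the sign function
  refine ⟨fun v => if 0 < x v then 1 else -1,
    fun v => by by_cases h : 0 < x v <;> simp [h], ?_⟩
  intro u v h
  have hterm := hinner u v h
  have hB : ((σ s(u, v) : ℤ) : ℝ) ^ 2 = 1 := by
    rcases hσ _ (G.mem_edgeSet.mpr h) with h1 | h1 <;> rw [h1] <;> norm_num
  have hkey : -((σ s(u, v) : ℤ) : ℝ) * (x u * x v) = |x u| * |x v| := by
    have hC : |x u| ^ 2 = x u ^ 2 := sq_abs _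
    have hD : |x v| ^ 2 = x v ^ 2 := sq_abs _
    linear_combination (1/2) * hterm + (1/2) * hC - (x v ^ 2 / 2) * hB + (1/2) * hD
  have habsu : 0 < |x u| := abs_pos.mpr (hpos u)
  have habsv : 0 < |x v| := abs_pos.mpr (hpos v)
  have habsprod : 0 < |x u| * |x v| := mul_pos habsu habsv
  rcases hσ _ (G.mem_edgeSet.mpr h) with h1 | h1 <;> rw [h1] <;> rw [h1] at hkey <;>
    push_cast at hkey
  · -- σ = 1 : x u * x v < 0
    have hprod : x u * x v < 0 := by nlinarith
    by_cases hu : 0 < x u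
    · have hv : ¬ 0 < x v := by nlinarith
      simp [hu, hv]
    · have hu' : x u < 0 := lt_of_le_of_ne (not_lt.mp hu) (hpos u)
      have hv : 0 < x v := by nlinarith
      simp [hu, hv]
  · -- σ = -1 : x u * x v > 0
    have hprod : 0 < x u * x v := by nlinarith
    by_cases hu : 0 < x u
    · have hv : 0 < x v := by nlinarith
      simp [hu, hv]
    · have hu' : x u < 0 := lt_of_le_of_ne (not_lt.mp hu) (hpos u)
      have hv : ¬ 0 < x v := by nlinarith
      simp [hu, hv]

end Main4

/-- For a connected graph `G` with any signature `σ`, the largest eigenvalue of the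
Kirchhoff matrix satisfies `λ¹(K(G, σ)) ≤ λ¹(K(-G))`, where `-G` is `G` with all edges
negative, with equality iff `(G, σ)` is antibalanced (i.e., `-Σ` is balanced). -/
theorem kirchhoff_max_eigenvalue_le_allNegative {V : Type*} [Fintype V] [DecidableEq V]
    (G : SimpleGraph V) (hconn : G.Connected)
    (σ : Sym2 V → ℤ) (hσ : ∀ e ∈ G.edgeSet, σ e = 1 ∨ σ e = -1) :
    maxEigen (kirchhoff G σ) ≤ maxEigen (kirchhoff G (fun _ => -1)) ∧
    (maxEigen (kirchhoff G σ) = maxEigen (kirchhoff G (fun _ => -1)) ↔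
      IsBalanced G (fun e => -σ e)) := by
  haveI : Nonempty V := hconn.nonempty
  refine ⟨maxEigen_le G σ hσ, ?_, ?_⟩
  · intro heq
    obtain ⟨θ, hθ, hpot⟩ := potential_of_eq G hconn σ hσ heq
    intro v w _
    have hθ2 : ∀ v, θ v * θ v = 1 := fun v => by rcases hθ v with h | h <;> rw [h] <;> norm_num
    have hprod := walk_prod_eq_potential (fun e => -σ e) θ hθ2 (fun u v h => hpot h) w
    rw [hprod]
    exact hθ2 v
  · intro hbal
    have hsq : ∀ e ∈ G.edgeSet, (-σ e) * (-σ e) = 1 := by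
      intro e he
      rcases hσ e he with h | h <;> rw [h] <;> norm_num
    obtain ⟨θ, hθ, hpot⟩ := exists_potential hconn (fun e => -σ e) hsq hbal
    exact maxEigen_eq_of_potential G σ hσ hθ (fun u v h => hpot h)
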